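/- The explicit formula q1 = (α + δ + ω + S̄ − √((α − (ω + S̄))² + δ(δ + 2(α + ω + S̄))))/(2S̄) satisfies the fixed point equation f1(q1, q2) = q1, where q2 = ω/(ω + S̄(1 − q1)) and f1(u1,u2) = (α + δ·u1·u2 + S̄·u1²)/(α + δ + S̄), assuming α, δ, ω, S̄ > 0. -/

import Mathlib

theorem stmt_0 (α δ ω S : ℝ) (hα : 0 < α) (hδ : 0 < δ) (hω : 0 < ω) (hS : 0 < S) :
    let q1 := (α + δ + ω + S - Real.sqrt ((α - (ω + S))^2 + δ*(δ + 2*(α + ω + S)))) / (2*S)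
    let q2 := ω / (ω + S*(1 - q1))
    (α + δ*q1*q2 + S*q1^2) / (α + δ + S) = q1 := by
  intro q1 q2
  have hE : (0:ℝ) ≤ (α - (ω + S))^2 + δ*(δ + 2*(α + ω + S)) := by positivity
  set D := Real.sqrt ((α - (ω + S))^2 + δ*(δ + 2*(α + ω + S))) with hDdef
  have hD2 : D^2 = (α - (ω + S))^2 + δ*(δ + 2*(α + ω + S)) := Real.sq_sqrt hE
  have hDpos : (0:ℝ) ≤ D := Real.sqrt_nonneg _
  have hDgt : α + δ - ω - S < D := by
    nlinarith [hD2, hDpos, sq_nonneg (D - (α + δ - ω - S)), sq_nonneg (D + (α + δ - ω - S))]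
  have hq1 : q1 = (α + δ + ω + S - D) / (2*S) := rfl
  have hq2 : q2 = ω / (ω + S*(1 - q1)) := rfl
  have hSne : S ≠ 0 := ne_of_gt hS
  have hDq : D = α + δ + ω + S - 2*S*q1 := by rw [hq1]; field_simp; ring
  have hquad : S^2*q1^2 - S*(α+δ+ω+S)*q1 + α*(ω+S) = 0 := by
    have h := hD2; rw [hDq] at h; linear_combination h/4
  have hrw : ω + S*(1 - q1) = (ω + S - α - δ + D)/2 := by
    rw [hq1]; field_simp; ring
  have hden : 0 < ω + S*(1 - q1) := by rw [hrw]; linarith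
  have hK2ne : ω + S*(1 - q1) ≠ 0 := ne_of_gt hden
  have hαδS : α + δ + S ≠ 0 := by positivity
  rw [hq2, div_eq_iff hαδS]
  rw [div_eq_iff hK2ne] at *
  field_simp
  linear_combination (1 - q1) * hquad
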